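/- Let f, g : {0,1}^n → {0,1} with E[f] = p₁ ∈ (0,1) and E[g] = p₂ = p₁^α for some α ≥ 0. Then for every 0 < ε < 1, ∑_{S ⊆ {1,…,n}} ε^{|S|} f̂(S) ĝ(S) ≥ p₁ · p₁^{(√α + ε)² / (1 − ε²)}. -/

import Mathlib

open Finset

noncomputable section

/-- The discrete cube `{0,1}^n`. -/
abbrev Cube (n : ℕ) := Fin n → Bool

/-- Inner product of real-valued functions on the cube w.r.t. the uniform measure. -/
def cInner (n : ℕ) (f g : Cube n → ℝ) : ℝ :=
  (∑ x : Cube n, f x * g x) / 2 ^ n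

/-- Expectation w.r.t. the uniform measure on the cube. -/
def cExp (n : ℕ) (f : Cube n → ℝ) : ℝ :=
  (∑ x : Cube n, f x) / 2 ^ n

/-- The Walsh character `r_S`. -/
def walsh (n : ℕ) (S : Finset (Fin n)) : Cube n → ℝ :=
  fun x => ∏ i ∈ S, (2 * (if x i then (1 : ℝ) else 0) - 1)

/-- Fourier–Walsh coefficient of `f` at `S`. -/
def fcoef (n : ℕ) (f : Cube n → ℝ) (S : Finset (Fin n)) : ℝ :=
  cInner n f (walsh n S)

/-- Real-valued version of a Boolean function. -/
def BR (n : ℕ) (f : Cube n → Bool) : Cube n → ℝ :=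
  fun x => if f x then 1 else 0


noncomputable section

/-- `sinh (s*x) ≥ s * sinh x` for `s ≥ 1`, `x ≥ 0`. -/
lemma sinh_smul_ge {s x : ℝ} (hs : 1 ≤ s) (hx : 0 ≤ x) :
    s * Real.sinh x ≤ Real.sinh (s * x) := by
  have hmono : MonotoneOn (fun x => Real.sinh (s * x) - s * Real.sinh x) (Set.Ici 0) := by
    apply monotoneOn_of_deriv_nonneg (convex_Ici 0)
    · fun_prop
    · apply Differentiable.differentiableOn; fun_prop
    · intro t ht
      have h1 : HasDerivAt (fun x : ℝ => Real.sinh (s * x) - s * Real.sinh x)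
          (Real.cosh (s * t) * s - s * Real.cosh t) t := by
        have := ((Real.hasDerivAt_sinh (s * t)).comp t
          ((hasDerivAt_id t).const_mul s)).sub ((Real.hasDerivAt_sinh t).const_mul s)
        exact this.congr_deriv (by simp)
      rw [h1.deriv]
      rw [interior_Ici] at ht
      have ht0 : (0:ℝ) ≤ t := le_of_lt ht
      have : Real.cosh t ≤ Real.cosh (s * t) := by
        rw [Real.cosh_le_cosh]
        rw [abs_of_nonneg ht0, abs_of_nonneg (by nlinarith)]
        nlinarith
      nlinarith [this, Real.cosh_pos t]
  have := hmono (Set.self_mem_Ici) (Set.mem_Ici.2 hx) hx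
  simpa using this

/-- `z^s - z^(-s) ≥ s (z - z⁻¹)` for `z ≥ 1`, `s ≥ 1`. -/
lemma key1 {s z : ℝ} (hs : 1 ≤ s) (hz : 1 ≤ z) :
    s * (z - z⁻¹) ≤ z ^ s - z ^ (-s) := by
  have hz0 : (0:ℝ) < z := by linarith
  set x := Real.log z with hxdef
  have hx0 : 0 ≤ x := Real.log_nonneg hz
  have h1 : z ^ s = Real.exp (s * x) := by
    rw [Real.rpow_def_of_pos hz0, mul_comm]
  have h2 : z ^ (-s) = Real.exp (-(s * x)) := by
    rw [Real.rpow_def_of_pos hz0]; ring_nf; rw [mul_comm]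
  have h3 : z = Real.exp x := (Real.exp_log hz0).symm
  have h4 : z⁻¹ = Real.exp (-x) := by rw [h3, ← Real.exp_neg]
  have := sinh_smul_ge hs hx0
  rw [Real.sinh_eq, Real.sinh_eq] at this
  rw [h1, h2, h4, h3]
  nlinarith [this]

end

section
open Real

/-- `(1+u)^s - (1-u)^s ≥ 2 s u (1-u²)^((s-1)/2)` for `s ≥ 1`, `0 ≤ u < 1`. -/
lemma keyP {s u : ℝ} (hs : 1 ≤ s) (hu0 : 0 ≤ u) (hu1 : u < 1) :
    2 * s * u * (1 - u^2) ^ ((s-1)/2) ≤ (1+u) ^ s - (1-u) ^ s := by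
  set P : ℝ := 1 + u with hP
  set M : ℝ := 1 - u with hM
  have hP0 : 0 < P := by simp [hP]; linarith
  have hM0 : 0 < M := by simp [hM]; linarith
  have hPM : 0 < P / M := div_pos hP0 hM0
  set z : ℝ := (P / M) ^ ((1:ℝ)/2) with hzdef
  have hz1 : 1 ≤ z := by
    have h1 : (1:ℝ) ≤ P / M := (one_le_div hM0).2 (by simp [hP, hM]; linarith)
    calc (1:ℝ) = 1 ^ ((1:ℝ)/2) := (one_rpow _).symm
    _ ≤ z := rpow_le_rpow zero_le_one h1 (by norm_num)
  have hz0 : 0 < z := lt_of_lt_of_le one_pos hz1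
  set C : ℝ := (P * M) ^ (s/2) with hCdef
  have hPMpos : 0 < P * M := mul_pos hP0 hM0
  have hC0 : 0 < C := rpow_pos_of_pos hPMpos _
  -- identity (i)
  have sq1 : P / M * (P * M) = P ^ (2:ℝ) := by
    rw [rpow_two]; field_simp
  have sq2 : (P / M)⁻¹ * (P * M) = M ^ (2:ℝ) := by
    rw [rpow_two]; field_simp
  have hi : z ^ s * C = P ^ s := by
    rw [hzdef, ← rpow_mul hPM.le, hCdef,
      show (1:ℝ)/2 * s = s/2 by ring, ← mul_rpow hPM.le hPMpos.le, sq1,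
      ← rpow_mul hP0.le, show (2:ℝ) * (s/2) = s by ring]
  have hii : z ^ (-s) * C = M ^ s := by
    rw [hzdef, ← rpow_mul hPM.le, show (1:ℝ)/2 * (-s) = -(s/2) by ring,
      rpow_neg hPM.le, ← inv_rpow hPM.le, hCdef,
      ← mul_rpow (le_of_lt (inv_pos.2 hPM)) hPMpos.le, sq2,
      ← rpow_mul hM0.le, show (2:ℝ) * (s/2) = s by ring]
  have hsplit : C = (P*M) ^ ((1:ℝ)/2) * (P*M) ^ ((s-1)/2) := by
    rw [hCdef, ← rpow_add hPMpos, show (1:ℝ)/2 + (s-1)/2 = s/2 by ring]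
  have hzP : z * (P*M) ^ ((1:ℝ)/2) = P := by
    rw [hzdef, ← mul_rpow hPM.le hPMpos.le, sq1, ← rpow_mul hP0.le,
      show (2:ℝ) * (1/2) = 1 by ring, rpow_one]
  have hzM : z⁻¹ * (P*M) ^ ((1:ℝ)/2) = M := by
    rw [hzdef, ← inv_rpow hPM.le, ← mul_rpow (le_of_lt (inv_pos.2 hPM)) hPMpos.le,
      sq2, ← rpow_mul hM0.le, show (2:ℝ) * (1/2) = 1 by ring, rpow_one]
  have hiii : (z - z⁻¹) * C = (P - M) * (P*M) ^ ((s-1)/2) := by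
    calc (z - z⁻¹) * C
        = (z * (P*M) ^ ((1:ℝ)/2) - z⁻¹ * (P*M) ^ ((1:ℝ)/2)) * (P*M) ^ ((s-1)/2) := by
          rw [hsplit]; ring
      _ = (P - M) * (P*M) ^ ((s-1)/2) := by rw [hzP, hzM]
  have hmain := key1 hs hz1
  have hmul := mul_le_mul_of_nonneg_right hmain hC0.le
  have hb : (1 : ℝ) - u^2 = P*M := by rw [hP, hM]; ring
  rw [hb]
  have hPMu : P - M = 2*u := by rw [hP, hM]; ring
  calc 2 * s * u * (P*M) ^ ((s-1)/2) = s * ((z - z⁻¹) * C) := by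
        rw [hiii, hPMu]; ring
    _ ≤ (z ^ s - z ^ (-s)) * C := by nlinarith [hmul]
    _ = P ^ s - M ^ s := by rw [sub_mul, hi, hii]
end

section
open Real

lemma key2 {r u : ℝ} (hr : 1 ≤ r) (hu0 : 0 ≤ u) (hu1 : u ≤ 1) :
    4*r*(1 - (1-u^2) ^ r) ≤ ((1+u) ^ r - (1-u) ^ r)^2 := by
  have hr0 : (0:ℝ) < r := lt_of_lt_of_le one_pos hr
  set G : ℝ → ℝ := fun v => ((1+v) ^ r - (1-v) ^ r)^2 + 4*r*(1-v^2) ^ r with hGdef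
  have hderiv : ∀ v : ℝ, HasDerivAt G
      (2*((1+v) ^ r - (1-v) ^ r)*(r*(1+v) ^ (r-1) + r*(1-v) ^ (r-1))
        + 4*r*(-(2*v) * r * (1-v^2) ^ (r-1))) v := by
    intro v
    have h1 : HasDerivAt (fun v : ℝ => (1+v) ^ r) (1 * r * (1+v) ^ (r-1)) v :=
      (HasDerivAt.const_add 1 (hasDerivAt_id v)).rpow_const (Or.inr hr)
    have h2 : HasDerivAt (fun v : ℝ => (1-v) ^ r) ((-1) * r * (1-v) ^ (r-1)) v :=
      (HasDerivAt.const_sub 1 (hasDerivAt_id v)).rpow_const (Or.inr hr)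
    have h3 : HasDerivAt (fun v : ℝ => 1 - v^2) (-(2*v)) v := by
      have := (HasDerivAt.const_sub 1 ((hasDerivAt_id v).pow 2))
      simpa using this
    have h4 : HasDerivAt (fun v : ℝ => (1-v^2) ^ r) (-(2*v) * r * (1-v^2) ^ (r-1)) v :=
      h3.rpow_const (Or.inr hr)
    have h5 := (((h1.sub h2).pow 2).add (h4.const_mul (4*r)))
    convert h5 using 1
    all_goals first | rfl | (simp only [Pi.sub_apply]; push_cast; ring)
  have hcont : Continuous G := by
    have : Differentiable ℝ G := fun v => (hderiv v).differentiableAt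
    exact this.continuous
  have hmono : MonotoneOn G (Set.Icc 0 1) := by
    apply monotoneOn_of_deriv_nonneg (convex_Icc 0 1) hcont.continuousOn
    · exact fun v _ => ((hderiv v).differentiableAt).differentiableWithinAt
    · intro v hv
      rw [interior_Icc] at hv
      obtain ⟨hv0, hv1⟩ := hv
      rw [(hderiv v).deriv]
      have hP0 : (0:ℝ) < 1 + v := by linarith
      have hM0 : (0:ℝ) < 1 - v := by linarith
      have hkey := keyP (s := 2*r-1) (by linarith) hv0.le hv1
      rw [show (2*r-1-1)/2 = r-1 by ring] at hkey
      have e1 : (1+v) ^ r * (1+v) ^ (r-1) = (1+v) ^ (2*r-1) := by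
        rw [← rpow_add hP0]; ring_nf
      have e2 : (1-v) ^ r * (1-v) ^ (r-1) = (1-v) ^ (2*r-1) := by
        rw [← rpow_add hM0]; ring_nf
      have ebase : ((1+v)*(1-v)) ^ (r-1) = (1-v^2) ^ (r-1) := by
        rw [show (1+v)*(1-v) = 1-v^2 by ring]
      have tP : (1+v) ^ r = (1+v) * (1+v) ^ (r-1) := by
        have t := rpow_add hP0 1 (r-1)
        rw [rpow_one] at t
        rw [show (1:ℝ)+(r-1) = r by ring] at t
        exact t
      have tM : (1-v) ^ r = (1-v) * (1-v) ^ (r-1) := by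
        have t := rpow_add hM0 1 (r-1)
        rw [rpow_one] at t
        rw [show (1:ℝ)+(r-1) = r by ring] at t
        exact t
      have e3 : (1+v) ^ r * (1-v) ^ (r-1) = (1+v) * (1-v^2) ^ (r-1) := by
        rw [tP, mul_assoc, ← mul_rpow hP0.le hM0.le, ebase]
      have e4 : (1-v) ^ r * (1+v) ^ (r-1) = (1-v) * (1-v^2) ^ (r-1) := by
        rw [tM, mul_assoc, ← mul_rpow hM0.le hP0.le,
          show (1-v)*(1+v) = 1-v^2 by ring]
      have hX0 : (0:ℝ) ≤ (1-v^2) ^ (r-1) := rpow_nonneg (by nlinarith) _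
      have hkey2 := mul_le_mul_of_nonneg_left hkey (by positivity : (0:ℝ) ≤ 2*r)
      nlinarith [hkey2, e1, e2, e3, e4, hX0, hv0, hr0]
  have h01 : G 0 ≤ G u := hmono (Set.mem_Icc.2 ⟨le_refl 0, zero_le_one⟩)
    (Set.mem_Icc.2 ⟨hu0, hu1⟩) hu0
  have hG0 : G 0 = 4*r := by
    simp [hGdef, Real.one_rpow]
  rw [hG0, hGdef] at h01
  simp only at h01
  linarith

end

section
open Real

lemma key2' {r u : ℝ} (hr : 1 ≤ r) (hu : |u| ≤ 1) :
    4*r*(1 - (1-u^2) ^ r) ≤ ((1+u) ^ r - (1-u) ^ r)^2 := by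
  rcases le_or_gt 0 u with h | h
  · exact key2 hr h (abs_le.1 hu).2
  · have h2 := key2 hr (by linarith : (0:ℝ) ≤ -u) (by
      have := (abs_le.1 hu).1; linarith)
    have e1 : 1 + -u = 1 - u := by ring
    have e2 : 1 - -u = 1 + u := by ring
    have e3 : (-u)^2 = u^2 := by ring
    rw [e1, e2, e3] at h2
    nlinarith [h2]

/-- `(1-1/r) D² ≤ S² - 4` where `S,D` are sum/difference of `(1±u)^r`. -/
lemma key3 {r u : ℝ} (hr : 1 ≤ r) (hu : |u| ≤ 1) :
    (1 - 1/r) * ((1+u) ^ r - (1-u) ^ r)^2 ≤ ((1+u) ^ r + (1-u) ^ r)^2 - 4 := by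
  have hr0 : (0:ℝ) < r := lt_of_lt_of_le one_pos hr
  have hu1 := (abs_le.1 hu).1
  have hu2 := (abs_le.1 hu).2
  have hP : (0:ℝ) ≤ 1 + u := by linarith
  have hM : (0:ℝ) ≤ 1 - u := by linarith
  have hSD : ((1+u) ^ r + (1-u) ^ r)^2 - ((1+u) ^ r - (1-u) ^ r)^2
      = 4 * (1-u^2) ^ r := by
    have : (1+u) ^ r * (1-u) ^ r = (1-u^2) ^ r := by
      rw [← mul_rpow hP hM, show (1+u)*(1-u) = 1-u^2 by ring]
    nlinarith [this]
  have h2 := key2' hr hu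
  have h3 := mul_le_mul_of_nonneg_left h2 (by positivity : (0:ℝ) ≤ 1/r)
  have hr1 : 1/r * (4*r) = 4 := by field_simp
  nlinarith [h3]

lemma key3S {r u : ℝ} (hr : 1 ≤ r) (hu : |u| ≤ 1) :
    2 ≤ (1+u) ^ r + (1-u) ^ r := by
  have hu1 := (abs_le.1 hu).1
  have hu2 := (abs_le.1 hu).2
  have h3 := key3 hr hu
  have hr0 : (0:ℝ) < r := lt_of_lt_of_le one_pos hr
  have h4 : (0:ℝ) ≤ (1 - 1/r) := by
    rw [sub_nonneg]
    exact (div_le_one hr0).2 hr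
  have hS0 : (0:ℝ) ≤ (1+u) ^ r + (1-u) ^ r :=
    add_nonneg (rpow_nonneg (by linarith) _) (rpow_nonneg (by linarith) _)
  nlinarith [h3, h4, sq_nonneg ((1+u) ^ r - (1-u) ^ r)]

lemma key4core {p q ρ X Y Dx Dy : ℝ} (hp' : (0:ℝ) ≤ 1-p) (hq' : (0:ℝ) ≤ 1-q)
    (hρ0 : 0 ≤ ρ) (hρ : ρ^2 ≤ (1-p)*(1-q)) (hX : 2 ≤ X) (hY : 2 ≤ Y)
    (h3x : (1-p)*Dx^2 ≤ X^2-4) (h3y : (1-q)*Dy^2 ≤ Y^2-4) :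
    4 ≤ X*Y + ρ*(Dx*Dy) := by
  have hXY4 : 4 ≤ X*Y := by nlinarith
  have hprod : ((1-p)*Dx^2) * ((1-q)*Dy^2) ≤ (X^2-4)*(Y^2-4) := by
    apply mul_le_mul h3x h3y (by positivity)
    nlinarith
  have h1 : (ρ*(Dx*Dy))^2 ≤ ((1-p)*(1-q))*(Dx^2*Dy^2) := by
    have := mul_le_mul_of_nonneg_right hρ (by positivity : (0:ℝ) ≤ Dx^2*Dy^2)
    nlinarith [this]
  have h3 : (X^2-4)*(Y^2-4) ≤ (X*Y-4)^2 := by nlinarith [sq_nonneg (X-Y)]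
  have hsq : (ρ*(Dx*Dy))^2 ≤ (X*Y-4)^2 := by nlinarith [hprod]
  nlinarith [hsq, hXY4]

/-- Normalized two-point two-function reverse hypercontractivity. -/
lemma key4norm {p q ρ u v : ℝ} (hp0 : 0 < p) (hp1 : p ≤ 1) (hq0 : 0 < q) (hq1 : q ≤ 1)
    (hρ0 : 0 ≤ ρ) (hρ : ρ^2 ≤ (1-p)*(1-q)) (hu : |u| ≤ 1) (hv : |v| ≤ 1) :
    4 ≤ (1+ρ)*((1+u) ^ (1/p) * (1+v) ^ (1/q) + (1-u) ^ (1/p) * (1-v) ^ (1/q))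
      + (1-ρ)*((1+u) ^ (1/p) * (1-v) ^ (1/q) + (1-u) ^ (1/p) * (1+v) ^ (1/q)) := by
  have hrp : 1 ≤ 1/p := by rw [le_div_iff₀ hp0]; linarith
  have hrq : 1 ≤ 1/q := by rw [le_div_iff₀ hq0]; linarith
  have h3x := key3 hrp hu
  have h3y := key3 hrq hv
  rw [show 1 - 1/(1/p) = 1 - p by rw [one_div_one_div]] at h3x
  rw [show 1 - 1/(1/q) = 1 - q by rw [one_div_one_div]] at h3y
  have hXS := key3S hrp hu
  have hYS := key3S hrq hv
  have hcore := key4core (by linarith) (by linarith) hρ0 hρ hXS hYS h3x h3y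
  nlinarith [hcore]

end

section
open Real

set_option maxHeartbeats 1000000 in
/-- Two-point two-function reverse hypercontractivity, general nonnegative values. -/
lemma key4 {p q ρ a b c d : ℝ} (hp0 : 0 < p) (hp1 : p ≤ 1) (hq0 : 0 < q) (hq1 : q ≤ 1)
    (hρ0 : 0 ≤ ρ) (hρ : ρ^2 ≤ (1-p)*(1-q))
    (ha : 0 ≤ a) (hb : 0 ≤ b) (hc : 0 ≤ c) (hd : 0 ≤ d) :
    ((a ^ p + b ^ p)/2) ^ (1/p) * ((c ^ q + d ^ q)/2) ^ (1/q)
      ≤ ((1+ρ)*(a*c + b*d) + (1-ρ)*(a*d + b*c))/4 := by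
  have hρ1 : ρ ≤ 1 := by nlinarith
  have hRHS : (0:ℝ) ≤ ((1+ρ)*(a*c + b*d) + (1-ρ)*(a*d + b*c))/4 := by
    nlinarith [mul_nonneg ha hc, mul_nonneg hb hd, mul_nonneg ha hd, mul_nonneg hb hc]
  have hA : (0:ℝ) ≤ a ^ p := rpow_nonneg ha p
  have hB : (0:ℝ) ≤ b ^ p := rpow_nonneg hb p
  have hC : (0:ℝ) ≤ c ^ q := rpow_nonneg hc q
  have hD : (0:ℝ) ≤ d ^ q := rpow_nonneg hd q
  rcases eq_or_lt_of_le (add_nonneg hA hB) with hab | hab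
  · have h0 : (a ^ p + b ^ p)/2 = 0 := by rw [← hab]; norm_num
    rw [h0, zero_rpow (one_div_ne_zero hp0.ne'), zero_mul]
    exact hRHS
  rcases eq_or_lt_of_le (add_nonneg hC hD) with hcd | hcd
  · have h0 : (c ^ q + d ^ q)/2 = 0 := by rw [← hcd]; norm_num
    rw [h0, zero_rpow (one_div_ne_zero hq0.ne'), mul_zero]
    exact hRHS
  set u := (a ^ p - b ^ p)/(a ^ p + b ^ p) with hudef
  set v := (c ^ q - d ^ q)/(c ^ q + d ^ q) with hvdef
  have hu : |u| ≤ 1 := by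
    rw [hudef, abs_div, abs_of_pos hab, div_le_one hab]
    rw [abs_le]; constructor <;> nlinarith
  have hv : |v| ≤ 1 := by
    rw [hvdef, abs_div, abs_of_pos hcd, div_le_one hcd]
    rw [abs_le]; constructor <;> nlinarith
  have h1u : (0:ℝ) ≤ 1 + u := by nlinarith [(abs_le.1 hu).1]
  have h1u' : (0:ℝ) ≤ 1 - u := by nlinarith [(abs_le.1 hu).2]
  have h1v : (0:ℝ) ≤ 1 + v := by nlinarith [(abs_le.1 hv).1]
  have h1v' : (0:ℝ) ≤ 1 - v := by nlinarith [(abs_le.1 hv).2]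
  set m := ((a ^ p + b ^ p)/2) ^ (1/p) with hmdef
  set k := ((c ^ q + d ^ q)/2) ^ (1/q) with hkdef
  have hm0 : (0:ℝ) ≤ m := rpow_nonneg (by positivity) _
  have hk0 : (0:ℝ) ≤ k := rpow_nonneg (by positivity) _
  have ea : m * (1+u) ^ (1/p) = a := by
    rw [hmdef, ← mul_rpow (by positivity) h1u,
      show (a ^ p + b ^ p)/2 * (1+u) = a ^ p by rw [hudef]; field_simp; ring,
      one_div, rpow_rpow_inv ha hp0.ne']
  have eb : m * (1-u) ^ (1/p) = b := by
    rw [hmdef, ← mul_rpow (by positivity) h1u',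
      show (a ^ p + b ^ p)/2 * (1-u) = b ^ p by rw [hudef]; field_simp; ring,
      one_div, rpow_rpow_inv hb hp0.ne']
  have ec : k * (1+v) ^ (1/q) = c := by
    rw [hkdef, ← mul_rpow (by positivity) h1v,
      show (c ^ q + d ^ q)/2 * (1+v) = c ^ q by rw [hvdef]; field_simp; ring,
      one_div, rpow_rpow_inv hc hq0.ne']
  have ed : k * (1-v) ^ (1/q) = d := by
    rw [hkdef, ← mul_rpow (by positivity) h1v',
      show (c ^ q + d ^ q)/2 * (1-v) = d ^ q by rw [hvdef]; field_simp; ring,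
      one_div, rpow_rpow_inv hd hq0.ne']
  have hnorm := key4norm hp0 hp1 hq0 hq1 hρ0 hρ hu hv
  have main : m * k * 4 ≤ (1+ρ)*(a*c + b*d) + (1-ρ)*(a*d + b*c) := by
    rw [← ea, ← eb, ← ec, ← ed]
    nlinarith [mul_le_mul_of_nonneg_left hnorm (mul_nonneg hm0 hk0)]
  linarith

end


def chi (b : Bool) : ℝ := 2 * (if b then (1 : ℝ) else 0) - 1

lemma walsh_eq (n : ℕ) (S : Finset (Fin n)) (x : Cube n) :
    walsh n S x = ∏ i ∈ S, chi (x i) := rfl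

/-- Correlated-pair expectation. -/
def J (n : ℕ) (ρ : ℝ) (f g : Cube n → ℝ) : ℝ :=
  (∑ x : Cube n, ∑ y : Cube n, f x * g y * ∏ i, (1 + ρ * (chi (x i) * chi (y i)))) / 4 ^ n

lemma sum_cube_succ {n : ℕ} (F : Cube (n+1) → ℝ) :
    ∑ x : Cube (n+1), F x
      = ∑ x : Cube n, F (Fin.cons false x) + ∑ x : Cube n, F (Fin.cons true x) := by
  rw [← (Fin.consEquiv (fun _ : Fin (n+1) => Bool)).sum_comp F]
  rw [Fintype.sum_prod_type]
  simp [Fin.consEquiv, add_comm]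

/-- Fourier expansion of `J`. -/
lemma lemA (n : ℕ) (ρ : ℝ) (f g : Cube n → ℝ) :
    J n ρ f g = ∑ S : Finset (Fin n), ρ ^ S.card * fcoef n f S * fcoef n g S := by
  have hprod : ∀ x y : Cube n, (∏ i, (1 + ρ * (chi (x i) * chi (y i))))
      = ∑ S : Finset (Fin n), ρ ^ S.card * (walsh n S x * walsh n S y) := by
    intro x y
    calc ∏ i : Fin n, (1 + ρ * (chi (x i) * chi (y i)))
        = ∏ i : Fin n, (ρ * (chi (x i) * chi (y i)) + 1) := by
          apply Finset.prod_congr rfl; intros; ring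
      _ = ∑ S ∈ (univ : Finset (Fin n)).powerset,
            (∏ i ∈ S, ρ * (chi (x i) * chi (y i))) * ∏ _i ∈ univ \ S, (1:ℝ) :=
          Finset.prod_add _ _ _
      _ = ∑ S : Finset (Fin n), ρ ^ S.card * (walsh n S x * walsh n S y) := by
          rw [Finset.powerset_univ]
          apply Finset.sum_congr rfl
          intro S _
          rw [Finset.prod_const_one, mul_one, Finset.prod_mul_distrib,
            Finset.prod_const, Finset.prod_mul_distrib, walsh_eq, walsh_eq]
  unfold J
  calc (∑ x : Cube n, ∑ y : Cube n, f x * g y * ∏ i, (1 + ρ * (chi (x i) * chi (y i)))) / 4 ^ n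
      = (∑ x : Cube n, ∑ y : Cube n,
          ∑ S : Finset (Fin n), ρ ^ S.card * ((f x * walsh n S x) * (g y * walsh n S y))) / 4 ^ n := by
        congr 1
        apply Finset.sum_congr rfl; intro x _
        apply Finset.sum_congr rfl; intro y _
        rw [hprod x y, Finset.mul_sum]
        apply Finset.sum_congr rfl; intro S _
        ring
    _ = (∑ S : Finset (Fin n), ρ ^ S.card *
          ((∑ x : Cube n, f x * walsh n S x) * (∑ y : Cube n, g y * walsh n S y))) / 4 ^ n := by
        congr 1
        have h1 : ∀ x : Cube n, (∑ y : Cube n, ∑ S : Finset (Fin n),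
            ρ ^ S.card * ((f x * walsh n S x) * (g y * walsh n S y)))
            = ∑ S : Finset (Fin n), ∑ y : Cube n,
              ρ ^ S.card * ((f x * walsh n S x) * (g y * walsh n S y)) :=
          fun x => Finset.sum_comm
        simp_rw [h1]
        rw [Finset.sum_comm]
        apply Finset.sum_congr rfl; intro S _
        rw [Finset.sum_mul_sum, Finset.mul_sum]
        apply Finset.sum_congr rfl; intro x _
        rw [Finset.mul_sum]
    _ = ∑ S : Finset (Fin n), ρ ^ S.card * fcoef n f S * fcoef n g S := by
        unfold fcoef cInner walsh
        rw [Finset.sum_div]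
        apply Finset.sum_congr rfl; intro S _
        have h4 : ((4:ℝ)) ^ n = 2 ^ n * 2 ^ n := by
          rw [← mul_pow]; norm_num
        rw [h4]
        field_simp

end

section
open Real

lemma cExp_nonneg {n : ℕ} {f : Cube n → ℝ} (hf : ∀ x, 0 ≤ f x) : 0 ≤ cExp n f :=
  div_nonneg (Finset.sum_nonneg fun x _ => hf x) (by positivity)

lemma cExp_succ {n : ℕ} (F : Cube (n+1) → ℝ) :
    cExp (n+1) F
      = (cExp n (fun x => F (Fin.cons false x)) + cExp n (fun x => F (Fin.cons true x)))/2 := by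
  unfold cExp
  rw [sum_cube_succ, pow_succ]
  field_simp

lemma J_succ {n : ℕ} (ρ : ℝ) (f g : Cube (n+1) → ℝ) :
    J (n+1) ρ f g
      = ((1 + ρ*(chi false*chi false)) * J n ρ (fun x => f (Fin.cons false x)) (fun y => g (Fin.cons false y))
        + (1 + ρ*(chi false*chi true)) * J n ρ (fun x => f (Fin.cons false x)) (fun y => g (Fin.cons true y))
        + (1 + ρ*(chi true*chi false)) * J n ρ (fun x => f (Fin.cons true x)) (fun y => g (Fin.cons false y))
        + (1 + ρ*(chi true*chi true)) * J n ρ (fun x => f (Fin.cons true x)) (fun y => g (Fin.cons true y)))/4 := by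
  have hsplit : ∀ (b c : Bool),
      (∑ x : Cube n, ∑ y : Cube n, f (Fin.cons b x) * g (Fin.cons c y)
        * ∏ i : Fin (n+1), (1 + ρ * (chi ((Fin.cons b x : Cube (n+1)) i) * chi ((Fin.cons c y : Cube (n+1)) i))))
      = (1 + ρ * (chi b * chi c))
        * (4^n * J n ρ (fun x => f (Fin.cons b x)) (fun y => g (Fin.cons c y))) := by
    intro b c
    unfold J
    rw [mul_div_cancel₀ _ (by positivity : ((4:ℝ))^n ≠ 0)]
    rw [Finset.mul_sum]
    apply Finset.sum_congr rfl; intro x _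
    rw [Finset.mul_sum]
    apply Finset.sum_congr rfl; intro y _
    rw [Fin.prod_univ_succ]
    simp only [Fin.cons_zero, Fin.cons_succ]
    ring
  have hN : (∑ x : Cube (n+1), ∑ y : Cube (n+1), f x * g y
        * ∏ i, (1 + ρ * (chi (x i) * chi (y i))))
      = (1 + ρ * (chi false * chi false)) * (4^n * J n ρ (fun x => f (Fin.cons false x)) (fun y => g (Fin.cons false y)))
        + (1 + ρ * (chi false * chi true)) * (4^n * J n ρ (fun x => f (Fin.cons false x)) (fun y => g (Fin.cons true y)))
        + ((1 + ρ * (chi true * chi false)) * (4^n * J n ρ (fun x => f (Fin.cons true x)) (fun y => g (Fin.cons false y)))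
        + (1 + ρ * (chi true * chi true)) * (4^n * J n ρ (fun x => f (Fin.cons true x)) (fun y => g (Fin.cons true y)))) := by
    calc (∑ x : Cube (n+1), ∑ y : Cube (n+1), f x * g y * ∏ i, (1 + ρ * (chi (x i) * chi (y i))))
        = (∑ x : Cube n, ∑ y : Cube (n+1), f (Fin.cons false x) * g y
            * ∏ i, (1 + ρ * (chi ((Fin.cons false x : Cube (n+1)) i) * chi (y i))))
          + (∑ x : Cube n, ∑ y : Cube (n+1), f (Fin.cons true x) * g y
            * ∏ i, (1 + ρ * (chi ((Fin.cons true x : Cube (n+1)) i) * chi (y i)))) :=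
          sum_cube_succ _
      _ = (∑ x : Cube n, (∑ y : Cube n, f (Fin.cons false x) * g (Fin.cons false y)
              * ∏ i, (1 + ρ * (chi ((Fin.cons false x : Cube (n+1)) i) * chi ((Fin.cons false y : Cube (n+1)) i)))
            + ∑ y : Cube n, f (Fin.cons false x) * g (Fin.cons true y)
              * ∏ i, (1 + ρ * (chi ((Fin.cons false x : Cube (n+1)) i) * chi ((Fin.cons true y : Cube (n+1)) i)))))
          + (∑ x : Cube n, (∑ y : Cube n, f (Fin.cons true x) * g (Fin.cons false y)
              * ∏ i, (1 + ρ * (chi ((Fin.cons true x : Cube (n+1)) i) * chi ((Fin.cons false y : Cube (n+1)) i)))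
            + ∑ y : Cube n, f (Fin.cons true x) * g (Fin.cons true y)
              * ∏ i, (1 + ρ * (chi ((Fin.cons true x : Cube (n+1)) i) * chi ((Fin.cons true y : Cube (n+1)) i))))) := by
          congr 1 <;> (apply Finset.sum_congr rfl; intro x _; exact sum_cube_succ _)
      _ = ((∑ x : Cube n, ∑ y : Cube n, f (Fin.cons false x) * g (Fin.cons false y)
              * ∏ i, (1 + ρ * (chi ((Fin.cons false x : Cube (n+1)) i) * chi ((Fin.cons false y : Cube (n+1)) i))))
            + ∑ x : Cube n, ∑ y : Cube n, f (Fin.cons false x) * g (Fin.cons true y)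
              * ∏ i, (1 + ρ * (chi ((Fin.cons false x : Cube (n+1)) i) * chi ((Fin.cons true y : Cube (n+1)) i))))
          + ((∑ x : Cube n, ∑ y : Cube n, f (Fin.cons true x) * g (Fin.cons false y)
              * ∏ i, (1 + ρ * (chi ((Fin.cons true x : Cube (n+1)) i) * chi ((Fin.cons false y : Cube (n+1)) i))))
            + ∑ x : Cube n, ∑ y : Cube n, f (Fin.cons true x) * g (Fin.cons true y)
              * ∏ i, (1 + ρ * (chi ((Fin.cons true x : Cube (n+1)) i) * chi ((Fin.cons true y : Cube (n+1)) i)))) := by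
          rw [Finset.sum_add_distrib, Finset.sum_add_distrib]
      _ = _ := by
          rw [hsplit false false, hsplit false true, hsplit true false, hsplit true true]
  have hJ : J (n+1) ρ f g = (∑ x : Cube (n+1), ∑ y : Cube (n+1), f x * g y
      * ∏ i, (1 + ρ * (chi (x i) * chi (y i)))) / 4^(n+1) := rfl
  rw [hJ, hN, pow_succ]
  field_simp
  ring

end

section
open Real

lemma chi_true : chi true = 1 := by norm_num [chi]
lemma chi_false : chi false = -1 := by norm_num [chi]

/-- Two-function reverse hypercontractivity on the cube. -/
lemma lemB {p q ρ : ℝ} (hp0 : 0 < p) (hp1 : p ≤ 1) (hq0 : 0 < q) (hq1 : q ≤ 1)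
    (hρ0 : 0 ≤ ρ) (hρ : ρ^2 ≤ (1-p)*(1-q)) :
    ∀ (n : ℕ) (f g : Cube n → ℝ), (∀ x, 0 ≤ f x) → (∀ x, 0 ≤ g x) →
    (cExp n fun x => f x ^ p) ^ (1/p) * (cExp n fun x => g x ^ q) ^ (1/q) ≤ J n ρ f g := by
  intro n
  induction n with
  | zero =>
    intro f g hf hg
    have hJ : J 0 ρ f g = f default * g default := by
      unfold J
      rw [Fintype.sum_unique, Fintype.sum_unique]
      simp
      exact congrArg₂ (· * ·) (congrArg f (Subsingleton.elim _ _))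
        (congrArg g (Subsingleton.elim _ _))
    have hE : ∀ (F : Cube 0 → ℝ), cExp 0 F = F default := by
      intro F
      unfold cExp
      rw [Fintype.sum_unique]
      simp
      exact congrArg F (Subsingleton.elim _ _)
    rw [hJ, hE, hE, one_div, one_div, rpow_rpow_inv (hf _) hp0.ne',
      rpow_rpow_inv (hg _) hq0.ne']
  | succ n ih =>
    intro f g hf hg
    have hρ1 : ρ ≤ 1 := by nlinarith
    have hfp : ∀ (b : Bool), (0:ℝ) ≤ cExp n fun x => f (Fin.cons b x) ^ p :=
      fun b => cExp_nonneg fun x => rpow_nonneg (hf _) _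
    have hgq : ∀ (b : Bool), (0:ℝ) ≤ cExp n fun x => g (Fin.cons b x) ^ q :=
      fun b => cExp_nonneg fun x => rpow_nonneg (hg _) _
    have h00 := ih (fun x => f (Fin.cons false x)) (fun y => g (Fin.cons false y))
      (fun x => hf _) (fun x => hg _)
    have h01 := ih (fun x => f (Fin.cons false x)) (fun y => g (Fin.cons true y))
      (fun x => hf _) (fun x => hg _)
    have h10 := ih (fun x => f (Fin.cons true x)) (fun y => g (Fin.cons false y))
      (fun x => hf _) (fun x => hg _)
    have h11 := ih (fun x => f (Fin.cons true x)) (fun y => g (Fin.cons true y))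
      (fun x => hf _) (fun x => hg _)
    -- abbreviations
    have ea : ((cExp n fun x => f (Fin.cons false x) ^ p) ^ (1/p)) ^ p
        = cExp n fun x => f (Fin.cons false x) ^ p := by
      rw [one_div, rpow_inv_rpow (hfp false) hp0.ne']
    have eb : ((cExp n fun x => f (Fin.cons true x) ^ p) ^ (1/p)) ^ p
        = cExp n fun x => f (Fin.cons true x) ^ p := by
      rw [one_div, rpow_inv_rpow (hfp true) hp0.ne']
    have ec : ((cExp n fun x => g (Fin.cons false x) ^ q) ^ (1/q)) ^ q
        = cExp n fun x => g (Fin.cons false x) ^ q := by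
      rw [one_div, rpow_inv_rpow (hgq false) hq0.ne']
    have ed : ((cExp n fun x => g (Fin.cons true x) ^ q) ^ (1/q)) ^ q
        = cExp n fun x => g (Fin.cons true x) ^ q := by
      rw [one_div, rpow_inv_rpow (hgq true) hq0.ne']
    have hkey := key4 (a := (cExp n fun x => f (Fin.cons false x) ^ p) ^ (1/p))
      (b := (cExp n fun x => f (Fin.cons true x) ^ p) ^ (1/p))
      (c := (cExp n fun x => g (Fin.cons false x) ^ q) ^ (1/q))
      (d := (cExp n fun x => g (Fin.cons true x) ^ q) ^ (1/q))
      hp0 hp1 hq0 hq1 hρ0 hρ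
      (rpow_nonneg (hfp false) _) (rpow_nonneg (hfp true) _)
      (rpow_nonneg (hgq false) _) (rpow_nonneg (hgq true) _)
    rw [ea, eb, ec, ed] at hkey
    have hEf : cExp (n+1) (fun x => f x ^ p)
        = ((cExp n fun x => f (Fin.cons false x) ^ p)
          + (cExp n fun x => f (Fin.cons true x) ^ p))/2 := cExp_succ _
    have hEg : cExp (n+1) (fun x => g x ^ q)
        = ((cExp n fun x => g (Fin.cons false x) ^ q)
          + (cExp n fun x => g (Fin.cons true x) ^ q))/2 := cExp_succ _
    rw [hEf, hEg]
    refine le_trans hkey ?_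
    rw [J_succ, chi_true, chi_false]
    have w1 : (0:ℝ) ≤ 1 + ρ := by linarith
    have w2 : (0:ℝ) ≤ 1 - ρ := by linarith
    have m00 := mul_le_mul_of_nonneg_left h00 w1
    have m01 := mul_le_mul_of_nonneg_left h01 w2
    have m10 := mul_le_mul_of_nonneg_left h10 w2
    have m11 := mul_le_mul_of_nonneg_left h11 w1
    have : (1 + ρ*(-1*-1)) = 1 + ρ := by ring
    nlinarith [m00, m01, m10, m11]

end

section
open Real

lemma sum_prod_corr (ρ : ℝ) : ∀ (n : ℕ) (x : Cube n),
    ∑ y : Cube n, ∏ i, (1 + ρ*(chi (x i) * chi (y i))) = 2^n := by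
  intro n
  induction n with
  | zero =>
    intro x
    rw [Fintype.sum_unique]
    simp
  | succ n ih =>
    intro x
    rw [sum_cube_succ (fun y => ∏ i, (1 + ρ*(chi (x i) * chi (y i))))]
    have hsp : ∀ (b : Bool) (y : Cube n),
        (∏ i : Fin (n+1), (1 + ρ*(chi (x i) * chi ((Fin.cons b y : Cube (n+1)) i))))
        = (1 + ρ*(chi (x 0) * chi b)) * ∏ i : Fin n, (1 + ρ*(chi (x i.succ) * chi (y i))) := by
      intro b y
      rw [Fin.prod_univ_succ]
      simp only [Fin.cons_zero, Fin.cons_succ]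
    simp only [hsp]
    rw [← Finset.mul_sum, ← Finset.mul_sum, ih (fun i => x i.succ), chi_true, chi_false]
    ring
  
lemma J_one (n : ℕ) (ρ : ℝ) (f : Cube n → ℝ) :
    J n ρ f (fun _ => 1) = cExp n f := by
  unfold J cExp
  have : ∀ x : Cube n, ∑ y : Cube n, f x * 1 * ∏ i, (1 + ρ*(chi (x i) * chi (y i)))
      = f x * 2^n := by
    intro x
    rw [← Finset.mul_sum, sum_prod_corr]
    ring
  simp only [this]
  rw [← Finset.sum_mul]
  have h4 : ((4:ℝ)) ^ n = 2 ^ n * 2 ^ n := by rw [← mul_pow]; norm_num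
  rw [h4]
  field_simp

lemma all_true {n : ℕ} {g : Cube n → Bool} (h : cExp n (BR n g) = 1) :
    BR n g = fun _ => (1:ℝ) := by
  have hcard : (Fintype.card (Cube n) : ℝ) = 2^n := by
    simp [Fintype.card_fun]
  have hsum : ∑ x : Cube n, BR n g x = 2^n := by
    unfold cExp at h
    field_simp at h
    linarith [h]
  have hzero : ∑ x : Cube n, (1 - BR n g x) = 0 := by
    rw [Finset.sum_sub_distrib, hsum]
    simp [hcard]
  have hterm : ∀ x ∈ Finset.univ (α := Cube n), (0:ℝ) ≤ 1 - BR n g x := by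
    intro x _
    unfold BR
    by_cases hx : g x <;> simp [hx]
  have := (Finset.sum_eq_zero_iff_of_nonneg hterm).1 hzero
  funext x
  have hx := this x (Finset.mem_univ x)
  linarith [hx]

end

section
open Real

/-- **Reverse hypercontractive lower bound on noise correlation**
(Mossel–O'Donnell–Regev–Steif–Sudakov, Corollary 3.5). If `E[f] = p₁ ∈ (0,1)` and
`E[g] = p₁^α` with `α ≥ 0`, then for all `0 < ε < 1`,
`∑_S ε^{|S|} f̂(S) ĝ(S) ≥ p₁ · p₁^{(√α+ε)²/(1−ε²)}`. -/
theorem noise_correlation_lower_bound (n : ℕ) (f g : Cube n → Bool) (p₁ α : ℝ)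
    (hp0 : 0 < p₁) (hp1 : p₁ < 1) (hα : 0 ≤ α)
    (hf : cExp n (BR n f) = p₁) (hg : cExp n (BR n g) = p₁ ^ α)
    (ε : ℝ) (hε0 : 0 < ε) (hε1 : ε < 1) :
    p₁ * p₁ ^ ((Real.sqrt α + ε) ^ 2 / (1 - ε ^ 2)) ≤
      ∑ S : Finset (Fin n), ε ^ S.card * fcoef n (BR n f) S * fcoef n (BR n g) S := by
  rw [← lemA]
  rcases eq_or_lt_of_le hα with hα0 | hαpos
  · -- α = 0 : g is identically one
    have hg1 : cExp n (BR n g) = 1 := by rw [hg, ← hα0, rpow_zero]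
    have hBR := all_true hg1
    have hJ : J n ε (BR n f) (BR n g) = p₁ := by
      rw [hBR, J_one, hf]
    rw [hJ, ← hα0, Real.sqrt_zero, zero_add]
    have ht : (0:ℝ) ≤ ε^2/(1-ε^2) := by
      apply div_nonneg (by positivity)
      nlinarith
    have := Real.rpow_le_one hp0.le hp1.le ht
    nlinarith [this, hp0]
  · -- α > 0
    set sa := Real.sqrt α with hsadef
    have hsa : 0 < sa := Real.sqrt_pos.2 hαpos
    have hsa2 : sa^2 = α := Real.sq_sqrt hα
    have h1e : (0:ℝ) < 1 - ε^2 := by nlinarith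
    have hden1 : (0:ℝ) < 1 + ε*sa := by positivity
    have hden2 : (0:ℝ) < sa + ε := by positivity
    set p := (1-ε^2)/(1+ε*sa) with hpdef
    set q := sa*(1-ε^2)/(sa+ε) with hqdef
    have hp0' : 0 < p := div_pos h1e hden1
    have hp1' : p ≤ 1 := by
      rw [hpdef, div_le_one hden1]
      nlinarith
    have hq0' : 0 < q := div_pos (by positivity) hden2
    have hq1' : q ≤ 1 := by
      rw [hqdef, div_le_one hden2]
      nlinarith
    have hρcond : ε^2 ≤ (1-p)*(1-q) := by
      rw [hpdef, hqdef]
      rw [show (1 - (1-ε^2)/(1+ε*sa)) = (ε*sa + ε^2)/(1+ε*sa) by field_simp <;> ring]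
      rw [show (1 - sa*(1-ε^2)/(sa+ε)) = (ε + sa*ε^2)/(sa+ε) by field_simp <;> ring]
      rw [div_mul_div_comm, le_div_iff₀ (by positivity)]
      ring_nf
      try exact le_rfl
    have hFnn : ∀ x, (0:ℝ) ≤ BR n f x := by
      intro x; unfold BR; by_cases hx : f x <;> simp [hx]
    have hGnn : ∀ x, (0:ℝ) ≤ BR n g x := by
      intro x; unfold BR; by_cases hx : g x <;> simp [hx]
    have hB := lemB hp0' hp1' hq0' hq1' hε0.le hρcond n (BR n f) (BR n g) hFnn hGnn
    have hFp : (fun x => BR n f x ^ p) = BR n f := by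
      funext x
      unfold BR
      by_cases hx : f x <;> simp [hx, Real.one_rpow, Real.zero_rpow hp0'.ne']
    have hGq : (fun x => BR n g x ^ q) = BR n g := by
      funext x
      unfold BR
      by_cases hx : g x <;> simp [hx, Real.one_rpow, Real.zero_rpow hq0'.ne']
    rw [hFp, hGq, hf, hg] at hB
    have hEq : p₁ ^ (1/p) * (p₁ ^ α) ^ (1/q) = p₁ * p₁ ^ ((sa + ε)^2/(1-ε^2)) := by
      rw [← Real.rpow_mul hp0.le, ← Real.rpow_add hp0,
        show (1:ℝ)/p + α*(1/q) = 1 + (sa+ε)^2/(1-ε^2) by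
          rw [hpdef, hqdef, ← hsa2]
          field_simp
          ring,
        Real.rpow_add hp0, Real.rpow_one]
    rw [hEq] at hB
    exact hB

end
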